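/- Let V₁, V₂ be doubly commuting pure isometries on a Hilbert space H. Then H = ⊕_{(n₁,n₂) ∈ ℕ₀²} V₁^{n₁} V₂^{n₂}(W), where W = ker V₁* ∩ ker V₂* is a generating wandering subspace. -/

import Mathlib

open scoped InnerProductSpace
open Filter Topology

/-- Słociński's Wold decomposition: for doubly commuting pure isometries,
`H = ⊕_{(n₁,n₂)} V₁^{n₁} V₂^{n₂}(W)` with `W = ker V₁* ∩ ker V₂*`. -/
theorem doubly_commuting_pure_isometries_wold
    {H : Type*} [NormedAddCommGroup H] [InnerProductSpace ℂ H] [CompleteSpace H]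
    (V₁ V₂ : H →L[ℂ] H) (hV₁ : ∀ x, ‖V₁ x‖ = ‖x‖) (hV₂ : ∀ x, ‖V₂ x‖ = ‖x‖)
    (hcomm : V₁.comp V₂ = V₂.comp V₁)
    (hdc : (ContinuousLinearMap.adjoint V₁).comp V₂
      = V₂.comp (ContinuousLinearMap.adjoint V₁))
    (hpure₁ : ∀ x : H, Tendsto (fun n : ℕ => (V₁ ^ n) ((ContinuousLinearMap.adjoint V₁ ^ n) x))
      atTop (𝓝 0))
    (hpure₂ : ∀ x : H, Tendsto (fun n : ℕ => (V₂ ^ n) ((ContinuousLinearMap.adjoint V₂ ^ n) x))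
      atTop (𝓝 0)) :
    let W := LinearMap.ker ((ContinuousLinearMap.adjoint V₁ : H →L[ℂ] H) : H →ₗ[ℂ] H) ⊓
      LinearMap.ker ((ContinuousLinearMap.adjoint V₂ : H →L[ℂ] H) : H →ₗ[ℂ] H)
    (⨆ p : ℕ × ℕ, W.map ((V₁ ^ p.1 * V₂ ^ p.2 : H →L[ℂ] H) : H →ₗ[ℂ] H)).topologicalClosure = ⊤ ∧
    (∀ p q : ℕ × ℕ, p ≠ q → ∀ w ∈ W, ∀ w' ∈ W,
      ⟪(V₁ ^ p.1) ((V₂ ^ p.2) w), (V₁ ^ q.1) ((V₂ ^ q.2) w')⟫_ℂ = 0) := by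
  intro W
  set A₁ := ContinuousLinearMap.adjoint V₁ with hA₁def
  set A₂ := ContinuousLinearMap.adjoint V₂ with hA₂def
  -- inner product identities for the adjoints
  have haL₁ : ∀ u v : H, ⟪A₁ u, v⟫_ℂ = ⟪u, V₁ v⟫_ℂ := fun u v =>
    ContinuousLinearMap.adjoint_inner_left V₁ v u
  have haR₁ : ∀ u v : H, ⟪u, A₁ v⟫_ℂ = ⟪V₁ u, v⟫_ℂ := fun u v =>
    ContinuousLinearMap.adjoint_inner_right V₁ u v
  have haL₂ : ∀ u v : H, ⟪A₂ u, v⟫_ℂ = ⟪u, V₂ v⟫_ℂ := fun u v =>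
    ContinuousLinearMap.adjoint_inner_left V₂ v u
  have haR₂ : ∀ u v : H, ⟪u, A₂ v⟫_ℂ = ⟪V₂ u, v⟫_ℂ := fun u v =>
    ContinuousLinearMap.adjoint_inner_right V₂ u v
  -- basic inner product identities for the isometries
  have hi₁ : ∀ x y : H, ⟪V₁ x, V₁ y⟫_ℂ = ⟪x, y⟫_ℂ :=
    (LinearMap.norm_map_iff_inner_map_map V₁).1 hV₁
  have hi₂ : ∀ x y : H, ⟪V₂ x, V₂ y⟫_ℂ = ⟪x, y⟫_ℂ :=
    (LinearMap.norm_map_iff_inner_map_map V₂).1 hV₂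
  -- A₁ (V₁ x) = x and A₂ (V₂ x) = x
  have hc₁ : ∀ x : H, A₁ (V₁ x) = x := by
    intro x
    refine ext_inner_left ℂ fun y => ?_
    rw [haR₁, hi₁]
  have hc₂ : ∀ x : H, A₂ (V₂ x) = x := by
    intro x
    refine ext_inner_left ℂ fun y => ?_
    rw [haR₂, hi₂]
  -- commutation relations (pointwise)
  have hcomm' : ∀ x : H, V₁ (V₂ x) = V₂ (V₁ x) := fun x =>
    congrFun (congrArg DFunLike.coe hcomm) x
  have hA₁V₂ : ∀ x : H, A₁ (V₂ x) = V₂ (A₁ x) := fun x =>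
    congrFun (congrArg DFunLike.coe hdc) x
  have hA₂V₁ : ∀ x : H, A₂ (V₁ x) = V₁ (A₂ x) := by
    intro x
    refine ext_inner_left ℂ fun y => ?_
    rw [haR₂]
    calc ⟪V₂ y, V₁ x⟫_ℂ = ⟪A₁ (V₂ y), x⟫_ℂ := by rw [haL₁]
      _ = ⟪V₂ (A₁ y), x⟫_ℂ := by rw [hA₁V₂]
      _ = ⟪A₁ y, A₂ x⟫_ℂ := by rw [← haR₂]
      _ = ⟪y, V₁ (A₂ x)⟫_ℂ := by rw [haL₁]
  have hA₁A₂ : ∀ x : H, A₁ (A₂ x) = A₂ (A₁ x) := by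
    intro x
    refine ext_inner_left ℂ fun y => ?_
    calc ⟪y, A₁ (A₂ x)⟫_ℂ = ⟪V₁ y, A₂ x⟫_ℂ := haR₁ _ _
      _ = ⟪V₂ (V₁ y), x⟫_ℂ := haR₂ _ _
      _ = ⟪V₁ (V₂ y), x⟫_ℂ := by rw [hcomm']
      _ = ⟪V₂ y, A₁ x⟫_ℂ := (haR₁ _ _).symm
      _ = ⟪y, A₂ (A₁ x)⟫_ℂ := (haR₂ _ _).symm
  -- powers applied pointwise
  have hpow : ∀ (T : H →L[ℂ] H) (n : ℕ) (x : H), (T ^ (n + 1)) x = T ((T ^ n) x) := by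
    intro T n x
    rw [pow_succ']
    rfl
  have hpow' : ∀ (T : H →L[ℂ] H) (n : ℕ) (x : H), (T ^ (n + 1)) x = (T ^ n) (T x) := by
    intro T n x
    rw [pow_succ]
    rfl
  -- membership in W
  have hWmem : ∀ z : H, z ∈ W ↔ A₁ z = 0 ∧ A₂ z = 0 := by
    intro z
    simp [W, Submodule.mem_inf, LinearMap.mem_ker]
    exact Iff.rfl
  -- inner products with equal powers cancel
  have hip₁ : ∀ (n : ℕ) (x y : H), ⟪(V₁ ^ n) x, (V₁ ^ n) y⟫_ℂ = ⟪x, y⟫_ℂ := by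
    intro n
    induction n with
    | zero => simp
    | succ n ih => intro x y; rw [hpow, hpow, hi₁, ih]
  have hip₂ : ∀ (n : ℕ) (x y : H), ⟪(V₂ ^ n) x, (V₂ ^ n) y⟫_ℂ = ⟪x, y⟫_ℂ := by
    intro n
    induction n with
    | zero => simp
    | succ n ih => intro x y; rw [hpow, hpow, hi₂, ih]
  -- V₂-powers preserve ker A₁
  have hkerA₁_V₂pow : ∀ (n : ℕ) (z : H), A₁ z = 0 → A₁ ((V₂ ^ n) z) = 0 := by
    intro n
    induction n with
    | zero => intro z hz; simpa using hz
    | succ n ih =>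
      intro z hz
      rw [hpow, hA₁V₂, ih z hz, map_zero]
  -- orthogonality for V₂ powers alone
  have key₂ : ∀ (b d : ℕ), b ≠ d → ∀ w ∈ W, ∀ w' ∈ W,
      ⟪(V₂ ^ b) w, (V₂ ^ d) w'⟫_ℂ = 0 := by
    have main : ∀ (b k : ℕ), ∀ w ∈ W, ∀ w' : H,
        ⟪(V₂ ^ b) w, (V₂ ^ (b + (k + 1))) w'⟫_ℂ = 0 := by
      intro b k w hw w'
      calc ⟪(V₂ ^ b) w, (V₂ ^ (b + (k + 1))) w'⟫_ℂ
          = ⟪(V₂ ^ b) w, (V₂ ^ b) ((V₂ ^ (k + 1)) w')⟫_ℂ := by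
            rw [pow_add, ContinuousLinearMap.mul_apply]
        _ = ⟪w, (V₂ ^ (k + 1)) w'⟫_ℂ := hip₂ b _ _
        _ = ⟪w, V₂ ((V₂ ^ k) w')⟫_ℂ := by rw [hpow]
        _ = ⟪A₂ w, (V₂ ^ k) w'⟫_ℂ := (haL₂ _ _).symm
        _ = 0 := by rw [((hWmem w).1 hw).2, inner_zero_left]
    intro b d hbd w hw w' hw'
    rcases lt_or_gt_of_ne hbd with h | h
    · obtain ⟨k, rfl⟩ : ∃ k, d = b + (k + 1) := ⟨d - b - 1, by omega⟩
      exact main b k w hw w'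
    · obtain ⟨k, rfl⟩ : ∃ k, b = d + (k + 1) := ⟨b - d - 1, by omega⟩
      rw [← inner_conj_symm, main d k w' hw' w, map_zero]
  -- the full orthogonality statement
  have key : ∀ (a b c d : ℕ), (a, b) ≠ (c, d) → ∀ w ∈ W, ∀ w' ∈ W,
      ⟪(V₁ ^ a) ((V₂ ^ b) w), (V₁ ^ c) ((V₂ ^ d) w')⟫_ℂ = 0 := by
    have main : ∀ (a k b d : ℕ), ∀ w ∈ W, ∀ w' : H,
        ⟪(V₁ ^ a) ((V₂ ^ b) w), (V₁ ^ (a + (k + 1))) ((V₂ ^ d) w')⟫_ℂ = 0 := by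
      intro a k b d w hw w'
      calc ⟪(V₁ ^ a) ((V₂ ^ b) w), (V₁ ^ (a + (k + 1))) ((V₂ ^ d) w')⟫_ℂ
          = ⟪(V₁ ^ a) ((V₂ ^ b) w), (V₁ ^ a) ((V₁ ^ (k + 1)) ((V₂ ^ d) w'))⟫_ℂ := by
            rw [pow_add, ContinuousLinearMap.mul_apply]
        _ = ⟪(V₂ ^ b) w, (V₁ ^ (k + 1)) ((V₂ ^ d) w')⟫_ℂ := hip₁ a _ _
        _ = ⟪(V₂ ^ b) w, V₁ ((V₁ ^ k) ((V₂ ^ d) w'))⟫_ℂ := by rw [hpow]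
        _ = ⟪A₁ ((V₂ ^ b) w), (V₁ ^ k) ((V₂ ^ d) w')⟫_ℂ := (haL₁ _ _).symm
        _ = 0 := by
            rw [hkerA₁_V₂pow b w ((hWmem w).1 hw).1, inner_zero_left]
    intro a b c d hne w hw w' hw'
    rcases lt_trichotomy a c with h | h | h
    · obtain ⟨k, rfl⟩ : ∃ k, c = a + (k + 1) := ⟨c - a - 1, by omega⟩
      exact main a k b d w hw _
    · subst h
      have hbd : b ≠ d := fun hbd => hne (by rw [hbd])
      rw [hip₁]
      exact key₂ b d hbd w hw w' hw'
    · obtain ⟨k, rfl⟩ : ∃ k, a = c + (k + 1) := ⟨a - c - 1, by omega⟩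
      rw [← inner_conj_symm, main c k d b w' hw' w, map_zero]
  refine ⟨?_, fun p q hpq w hw w' hw' =>
    key p.1 p.2 q.1 q.2 (fun h => hpq (by
      rcases p with ⟨a, b⟩; rcases q with ⟨c, d⟩
      simpa using h)) w hw w' hw'⟩
  -- density part
  rw [Submodule.topologicalClosure_eq_top_iff, Submodule.eq_bot_iff]
  intro x hx
  -- move powers across the inner product
  have e₁ : ∀ (n : ℕ) (u v : H), ⟪(V₁ ^ n) u, v⟫_ℂ = ⟪u, (A₁ ^ n) v⟫_ℂ := by
    intro n
    induction n with
    | zero => simp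
    | succ n ih =>
      intro u v
      calc ⟪(V₁ ^ (n + 1)) u, v⟫_ℂ = ⟪(V₁ ^ n) (V₁ u), v⟫_ℂ := by rw [hpow']
        _ = ⟪V₁ u, (A₁ ^ n) v⟫_ℂ := ih _ _
        _ = ⟪u, A₁ ((A₁ ^ n) v)⟫_ℂ := (haR₁ _ _).symm
        _ = ⟪u, (A₁ ^ (n + 1)) v⟫_ℂ := by rw [hpow]
  have e₂ : ∀ (n : ℕ) (u v : H), ⟪(V₂ ^ n) u, v⟫_ℂ = ⟪u, (A₂ ^ n) v⟫_ℂ := by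
    intro n
    induction n with
    | zero => simp
    | succ n ih =>
      intro u v
      calc ⟪(V₂ ^ (n + 1)) u, v⟫_ℂ = ⟪(V₂ ^ n) (V₂ u), v⟫_ℂ := by rw [hpow']
        _ = ⟪V₂ u, (A₂ ^ n) v⟫_ℂ := ih _ _
        _ = ⟪u, A₂ ((A₂ ^ n) v)⟫_ℂ := (haR₂ _ _).symm
        _ = ⟪u, (A₂ ^ (n + 1)) v⟫_ℂ := by rw [hpow]
  -- x is orthogonal to every V₁^a V₂^b w, hence W ⊥ (A₂^b)(A₁^a) x
  have horth : ∀ (a b : ℕ), ∀ w ∈ W, ⟪w, (A₂ ^ b) ((A₁ ^ a) x)⟫_ℂ = 0 := by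
    intro a b w hw
    have hmem : (V₁ ^ a) ((V₂ ^ b) w) ∈
          ⨆ p : ℕ × ℕ, W.map ((V₁ ^ p.1 * V₂ ^ p.2 : H →L[ℂ] H) : H →ₗ[ℂ] H) := by
      refine Submodule.mem_iSup_of_mem (a, b) ?_
      exact ⟨w, hw, rfl⟩
    have h0 : ⟪(V₁ ^ a) ((V₂ ^ b) w), x⟫_ℂ = 0 :=
      (Submodule.mem_orthogonal _ x).1 hx _ hmem
    calc ⟪w, (A₂ ^ b) ((A₁ ^ a) x)⟫_ℂ = ⟪(V₂ ^ b) w, (A₁ ^ a) x⟫_ℂ := (e₂ _ _ _).symm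
      _ = ⟪(V₁ ^ a) ((V₂ ^ b) w), x⟫_ℂ := (e₁ _ _ _).symm
      _ = 0 := h0
  -- the defect "projections", pointwise
  set P : H → H := fun u => u - V₁ (A₁ u) with hPdef
  set Q : H → H := fun u => u - V₂ (A₂ u) with hQdef
  have hPker : ∀ u, A₁ (P u) = 0 := by
    intro u; simp [hPdef, map_sub, hc₁]
  have hQker : ∀ u, A₂ (Q u) = 0 := by
    intro u; simp [hQdef, map_sub, hc₂]
  have hPfix : ∀ u, A₁ u = 0 → P u = u := by
    intro u hu; simp [hPdef, hu]
  have hQfix : ∀ u, A₂ u = 0 → Q u = u := by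
    intro u hu; simp [hQdef, hu]
  have hPA₂ : ∀ u, P (A₂ u) = A₂ (P u) := by
    intro u
    simp only [hPdef, map_sub]
    rw [hA₂V₁, hA₁A₂]
  have hPQ : ∀ u, P (Q u) = Q (P u) := by
    intro u
    simp only [hPdef, hQdef, map_sub]
    have h1 : A₁ (V₂ (A₂ u)) = V₂ (A₁ (A₂ u)) := hA₁V₂ _
    have h2 : A₂ (V₁ (A₁ u)) = V₁ (A₂ (A₁ u)) := hA₂V₁ _
    rw [h1, h2, hcomm', hA₁A₂]
    abel
  -- self-adjointness of P and Q (pointwise)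
  have hPsa : ∀ u v, ⟪P u, v⟫_ℂ = ⟪u, P v⟫_ℂ := by
    intro u v
    simp only [hPdef, inner_sub_left, inner_sub_right]
    congr 1
    calc ⟪V₁ (A₁ u), v⟫_ℂ = ⟪A₁ u, A₁ v⟫_ℂ := by rw [← haR₁]
      _ = ⟪u, V₁ (A₁ v)⟫_ℂ := haL₁ _ _
  have hQsa : ∀ u v, ⟪Q u, v⟫_ℂ = ⟪u, Q v⟫_ℂ := by
    intro u v
    simp only [hQdef, inner_sub_left, inner_sub_right]
    congr 1
    calc ⟪V₂ (A₂ u), v⟫_ℂ = ⟪A₂ u, A₂ v⟫_ℂ := by rw [← haR₂]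
      _ = ⟪u, V₂ (A₂ v)⟫_ℂ := haL₂ _ _
  -- P (Q z) = 0 for z = (A₂^b)(A₁^a) x
  have hPQ0 : ∀ a b : ℕ, P (Q ((A₂ ^ b) ((A₁ ^ a) x))) = 0 := by
    intro a b
    set z := (A₂ ^ b) ((A₁ ^ a) x) with hz
    set w := P (Q z) with hwdef
    have hwA₁ : A₁ w = 0 := hPker _
    have hwA₂ : A₂ w = 0 := by
      show A₂ (P (Q z)) = 0
      rw [← hPA₂, hQker]
      simp [hPdef]
    have hwW : w ∈ W := (hWmem w).2 ⟨hwA₁, hwA₂⟩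
    have : ⟪w, w⟫_ℂ = 0 := by
      calc ⟪w, w⟫_ℂ = ⟪w, P (Q z)⟫_ℂ := by rw [← hwdef]
        _ = ⟪P w, Q z⟫_ℂ := (hPsa _ _).symm
        _ = ⟪w, Q z⟫_ℂ := by rw [hPfix w hwA₁]
        _ = ⟪Q w, z⟫_ℂ := by rw [hQsa]
        _ = ⟪w, z⟫_ℂ := by rw [hQfix w hwA₂]
        _ = 0 := horth a b w hwW
    exact inner_self_eq_zero.1 this
  -- powers of A₂ commute with P
  have hPA₂pow : ∀ (b : ℕ) (u : H), (A₂ ^ b) (P u) = P ((A₂ ^ b) u) := by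
    intro b
    induction b with
    | zero => intro u; simp
    | succ b ih =>
      intro u
      rw [hpow, ih, ← hPA₂, hpow]
  -- Step A : P ((A₁^a) x) = 0 for every a
  have hPa : ∀ a : ℕ, P ((A₁ ^ a) x) = 0 := by
    intro a
    set y := P ((A₁ ^ a) x) with hydef
    have hQy : ∀ b : ℕ, Q ((A₂ ^ b) y) = 0 := by
      intro b
      rw [hydef, hPA₂pow, ← hPQ]
      exact hPQ0 a b
    have hstep : ∀ b : ℕ, (A₂ ^ b) y = V₂ ((A₂ ^ (b + 1)) y) := by
      intro b
      have h := hQy b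
      have : (A₂ ^ b) y - V₂ (A₂ ((A₂ ^ b) y)) = 0 := h
      rw [sub_eq_zero] at this
      rw [this, hpow]
    have hyb : ∀ m : ℕ, y = (V₂ ^ m) ((A₂ ^ m) y) := by
      intro m
      induction m with
      | zero => simp
      | succ m ih =>
        calc y = (V₂ ^ m) ((A₂ ^ m) y) := ih
          _ = (V₂ ^ m) (V₂ ((A₂ ^ (m + 1)) y)) := by rw [hstep m]
          _ = (V₂ ^ (m + 1)) ((A₂ ^ (m + 1)) y) := (hpow' V₂ m _).symm
    have hlim := hpure₂ y
    have hconst : (fun m : ℕ => (V₂ ^ m) ((A₂ ^ m) y)) = fun _ => y :=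
      funext fun m => (hyb m).symm
    rw [hconst] at hlim
    exact (tendsto_nhds_unique tendsto_const_nhds hlim)
  -- Step B : x = V₁^n (A₁^n x) for every n, hence x = 0
  have hstep : ∀ a : ℕ, (A₁ ^ a) x = V₁ ((A₁ ^ (a + 1)) x) := by
    intro a
    have h := hPa a
    have : (A₁ ^ a) x - V₁ (A₁ ((A₁ ^ a) x)) = 0 := h
    rw [sub_eq_zero] at this
    rw [this, hpow]
  have hxn : ∀ n : ℕ, x = (V₁ ^ n) ((A₁ ^ n) x) := by
    intro n
    induction n with
    | zero => simp
    | succ n ih =>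
      calc x = (V₁ ^ n) ((A₁ ^ n) x) := ih
        _ = (V₁ ^ n) (V₁ ((A₁ ^ (n + 1)) x)) := by rw [hstep n]
        _ = (V₁ ^ (n + 1)) ((A₁ ^ (n + 1)) x) := (hpow' V₁ n _).symm
  have hlim := hpure₁ x
  have hconst : (fun n : ℕ => (V₁ ^ n) ((A₁ ^ n) x)) = fun _ => x :=
    funext fun n => (hxn n).symm
  rw [hconst] at hlim
  exact (tendsto_nhds_unique tendsto_const_nhds hlim)
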